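/- arXiv:2503.15263 — 3 statements merged into one kernel-verified Lean document; each statement's English description precedes it below -/
import Mathlib

section
/- Let γ be a translation-invariant Gibbsian specification on Ω = E^ℤ and φ_γ the associated potential. Then for all a_0, b_0 ∈ E, n ∈ ℕ and ω ∈ Ω, Σ_{i=−n}^{n} [φ_γ(S^i(ω^{b_0})) − φ_γ(S^i(ω^{a_0}))] = log [ γ_{{0}}(b_0 | 𝐚_{−∞}^{−n−1} ω_{−n}^{−1} ω_1^{∞}) / γ_{{0}}(a_0 | 𝐚_{−∞}^{−n−1} ω_{−n}^{−1} ω_1^{∞}) ], and as n → ∞ this converges uniformly in ω ∈ Ω to log [ γ_{{0}}(b_0 | ω_{ℤ∖{0}}) / γ_{{0}}(a_0 | ω_{ℤ∖{0}}) ]. -/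
open Filter Topology MeasureTheory

namespace GP

/-- The configuration space `Ω = E^ℤ`. -/
abbrev Conf (E : Type*) := ℤ → E

variable {E : Type*}

/-- The shift by `i`: `(shiftZ i ω) k = ω (k + i)`.  The left shift `S` is `shiftZ 1`. -/
def shiftZ (i : ℤ) (ω : Conf E) : Conf E := fun k => ω (k + i)

/-- The cylinder set determined by a word `w ∈ E^n` (placed on coordinates `0,…,n-1`). -/
def cylW {n : ℕ} (w : Fin n → E) : Set (Conf E) := {ω | ∀ j : Fin n, ω ((j : ℕ) : ℤ) = w j}

/-- The cylinder set `[ω_0^{n-1}]`. -/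
def cylPt (ω : Conf E) (n : ℕ) : Set (Conf E) :=
  {ω' | ∀ j : ℕ, j < n → ω' (j : ℤ) = ω (j : ℤ)}

/-- Birkhoff sum `S_n φ = ∑_{k=0}^{n-1} φ ∘ S^k`. -/
def birk (φ : Conf E → ℝ) (n : ℕ) (ω : Conf E) : ℝ :=
  ∑ k ∈ Finset.range n, φ (shiftZ (k : ℤ) ω)

/-- Topological pressure of `φ` on the full shift:
`P(φ) = lim_n (1/n) log ∑_{w ∈ E^n} sup_{ω ∈ [w]} exp (S_n φ (ω))`
(the limit exists; we use `limsup` as the defining expression). -/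
noncomputable def press [Fintype E] (φ : Conf E → ℝ) : ℝ :=
  Filter.limsup (fun n : ℕ =>
    Real.log (∑ w : Fin n → E, sSup ((fun ω => Real.exp (birk φ n ω)) '' cylW w)) / n) atTop

/-- Kolmogorov–Sinai entropy of a shift-invariant measure on the full shift,
computed along the canonical generating partition into cylinders
(the limit exists; we use `limsup` as the defining expression). -/
noncomputable def ent [Fintype E] [MeasurableSpace E] (μ : Measure (Conf E)) : ℝ :=
  Filter.limsup (fun n : ℕ =>
    (- ∑ w : Fin n → E, ((μ (cylW w)).toReal * Real.log (μ (cylW w)).toReal)) / n) atTop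

/-- Shift invariance of a measure. -/
def ShiftInv [MeasurableSpace E] (μ : Measure (Conf E)) : Prop :=
  Measure.map (shiftZ 1) μ = μ

/-- `μ` is an equilibrium state for `φ`: `μ` is a shift-invariant Borel probability
measure with `h(μ) + ∫ φ dμ = P(φ)`. -/
def IsEquilibrium [Fintype E] [MeasurableSpace E] (φ : Conf E → ℝ)
    (μ : Measure (Conf E)) : Prop :=
  IsProbabilityMeasure μ ∧ ShiftInv μ ∧ ent μ + ∫ ω, φ ω ∂μ = press φ

/-- `ω^c`: the configuration equal to `c` at site `0` and to `ω` elsewhere. -/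
def upd0 (ω : Conf E) (c : E) : Conf E := Function.update ω 0 c

/-- Partial sums `ρ_n(ξ,η) = ∑_{i=-n}^{n} (φ(S^i ξ) - φ(S^i η))`. -/
noncomputable def rhoN (φ : Conf E → ℝ) (ξ η : Conf E) (n : ℕ) : ℝ :=
  ∑ i ∈ Finset.Icc (-(n : ℤ)) (n : ℤ), (φ (shiftZ i ξ) - φ (shiftZ i η))

/-- `φ` has the extensibility property: for all `a b ∈ E`, the functions
`ω ↦ ∑_{i=-n}^{n} (φ(S^i(ω^b)) - φ(S^i(ω^a)))` converge uniformly as `n → ∞`. -/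
def Extensible (φ : Conf E → ℝ) : Prop :=
  ∀ a b : E, ∃ r : Conf E → ℝ,
    TendstoUniformly (fun n ω => rhoN φ (upd0 ω b) (upd0 ω a) n) r atTop

/-- The cocycle `ρ^φ(ξ,η) = lim_n ∑_{i=-n}^{n} (φ(S^i ξ) - φ(S^i η))`. -/
noncomputable def rho (φ : Conf E → ℝ) (ξ η : Conf E) : ℝ :=
  limUnder atTop (rhoN φ ξ η)

/-- `ξ` and `η` differ in at most finitely many coordinates. -/
def FinDiff (ξ η : Conf E) : Prop := {k : ℤ | ξ k ≠ η k}.Finite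

/-- `ovr Λ ξ ω` is the configuration `ξ_Λ ω_{ℤ∖Λ}`, equal to `ξ` on `Λ` and to `ω` off `Λ`. -/
def ovr (Λ : Finset ℤ) (ξ : {k // k ∈ Λ} → E) (ω : Conf E) : Conf E :=
  fun k => if h : k ∈ Λ then ξ ⟨k, h⟩ else ω k

/-- `γ` is a specification: each `γ_Λ(·|ω_{Λ^c})` is a probability distribution on `E^Λ`,
and the family is consistent (`γ_Λ = γ_Λ ∘ γ_V` for `V ⊆ Λ`); here `γ Λ ω` denotes
`γ_Λ(ω_Λ | ω_{Λ^c})`. -/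
def IsSpecification [Fintype E] (γ : Finset ℤ → Conf E → ℝ) : Prop :=
  (∀ (Λ : Finset ℤ) (ω : Conf E), 0 ≤ γ Λ ω) ∧
  (∀ (Λ : Finset ℤ) (ω : Conf E), ∑ ξ : {k // k ∈ Λ} → E, γ Λ (ovr Λ ξ ω) = 1) ∧
  (∀ V Λ : Finset ℤ, V ⊆ Λ → ∀ ω : Conf E,
     γ Λ ω = (∑ η : {k // k ∈ V} → E, γ Λ (ovr V η ω)) * γ V ω)

/-- Non-nullness: `inf_ω γ_Λ(ω_Λ|ω_{Λ^c}) > 0` for every finite `Λ`. -/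
def NonNull (γ : Finset ℤ → Conf E → ℝ) : Prop :=
  ∀ Λ : Finset ℤ, ∃ c > (0 : ℝ), ∀ ω : Conf E, c ≤ γ Λ ω

/-- Continuity (quasilocality): `ω ↦ γ_Λ(ω_Λ|ω_{Λ^c})` is continuous for every finite `Λ`. -/
def ContSpec [TopologicalSpace E] (γ : Finset ℤ → Conf E → ℝ) : Prop :=
  ∀ Λ : Finset ℤ, Continuous (γ Λ)

/-- A Gibbsian specification: a non-null continuous specification. -/
def IsGibbsSpec [Fintype E] [TopologicalSpace E] (γ : Finset ℤ → Conf E → ℝ) : Prop :=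
  IsSpecification γ ∧ NonNull γ ∧ ContSpec γ

/-- Translation invariance of a specification: `γ_{Λ+1} = γ_Λ ∘ S`. -/
def SpecTI (γ : Finset ℤ → Conf E → ℝ) : Prop :=
  ∀ (Λ : Finset ℤ) (ω : Conf E), γ (Λ.image (· + 1)) ω = γ Λ (shiftZ 1 ω)

/-- `μ` is a DLR-Gibbs measure for the specification `γ`: `μ` is a Borel probability
measure satisfying the DLR equations `∫ γ_Λ(f|·) dμ = ∫ f dμ` for every finite `Λ`
and every continuous `f` (equivalently, each `γ_Λ` is a version of the conditional
probabilities of `μ`). -/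
def IsDLRGibbs [Fintype E] [MeasurableSpace E] [TopologicalSpace E]
    (γ : Finset ℤ → Conf E → ℝ) (μ : Measure (Conf E)) : Prop :=
  IsProbabilityMeasure μ ∧
  ∀ (Λ : Finset ℤ) (f : Conf E → ℝ), Continuous f →
    ∫ ω, (∑ ξ : {k // k ∈ Λ} → E, γ Λ (ovr Λ ξ ω) * f (ovr Λ ξ ω)) ∂μ = ∫ ω, f ω ∂μ

/-- The specification `γ^φ` associated with an extensible potential `φ`:
`γ^φ_Λ(ω_Λ|ω_{Λ^c}) = (∑_{ξ_Λ ∈ E^Λ} exp ρ^φ(ξ_Λ ω_{ℤ∖Λ}, ω))⁻¹`. -/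
noncomputable def specOf [Fintype E] (φ : Conf E → ℝ) : Finset ℤ → Conf E → ℝ :=
  fun Λ ω => (∑ ξ : {k // k ∈ Λ} → E, Real.exp (rho φ (ovr Λ ξ ω) ω))⁻¹

/-- The configuration `𝐚_{-∞}^{-1} b ω_1^{∞}`: equal to `a` at all negative
coordinates, to `b` at coordinate `0`, and to `ω` at positive coordinates. -/
def bca (a : E) (ω : Conf E) (b : E) : Conf E :=
  fun k => if k < 0 then a else if k = 0 then b else ω k

/-- The potential associated with a specification:
`φ_γ(ω) = log (γ_{{0}}(ω_0 | 𝐚_{-∞}^{-1} ω_1^{∞}) / γ_{{0}}(a | 𝐚_{-∞}^{-1} ω_1^{∞}))`. -/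
noncomputable def phiOf (γ : Finset ℤ → Conf E → ℝ) (a : E) (ω : Conf E) : ℝ :=
  Real.log (γ ({0} : Finset ℤ) (bca a ω (ω 0)) / γ ({0} : Finset ℤ) (bca a ω a))

/-- `μ` is weak Bowen-Gibbs for `φ` with constant `P`. -/
def WeakBowenGibbs [MeasurableSpace E] (μ : Measure (Conf E)) (φ : Conf E → ℝ)
    (P : ℝ) : Prop :=
  ∃ C : ℕ → ℝ, (∀ n, 0 < C n) ∧
    Tendsto (fun n : ℕ => Real.log (C n) / n) atTop (𝓝 0) ∧
    ∀ (n : ℕ) (ω : Conf E),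
      (C n)⁻¹ ≤ (μ (cylPt ω n)).toReal / Real.exp (birk φ n ω - n * P) ∧
      (μ (cylPt ω n)).toReal / Real.exp (birk φ n ω - n * P) ≤ C n


section Aux

variable {E : Type*}

private lemma shiftZ_zero' (ω : Conf E) : shiftZ 0 ω = ω := by
  funext k; simp [shiftZ]

private lemma shiftZ_shift (m : ℤ) (ω : Conf E) :
    shiftZ 1 (shiftZ m ω) = shiftZ (m + 1) ω := by
  funext k; show ω (k + 1 + m) = ω (k + (m + 1)); congr 1; ring

private lemma gamma_pos (γ : Finset ℤ → Conf E → ℝ) (hnn : NonNull γ)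
    (Λ : Finset ℤ) (ω : Conf E) : 0 < γ Λ ω := by
  obtain ⟨c, hc, h⟩ := hnn Λ
  exact lt_of_lt_of_le hc (h ω)

private lemma phiOf_eq (γ : Finset ℤ → Conf E → ℝ) (hnn : NonNull γ) (a : E) (ν : Conf E) :
    phiOf γ a ν = Real.log (γ {0} (bca a ν (ν 0))) - Real.log (γ {0} (bca a ν a)) :=
  Real.log_div (gamma_pos γ hnn _ _).ne' (gamma_pos γ hnn _ _).ne'

private lemma phi_congr (γ : Finset ℤ → Conf E → ℝ) (hnn : NonNull γ) (a : E) {ν ν' : Conf E}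
    (h : ∀ k : ℤ, 0 ≤ k → ν k = ν' k) : phiOf γ a ν = phiOf γ a ν' := by
  have hb : ∀ x : E, bca a ν x = bca a ν' x := by
    intro x; funext k
    by_cases h1 : k < 0
    · simp [bca, h1]
    · by_cases h2 : k = 0 <;> simp [bca, h1, h2, h k (by omega)]
  rw [phiOf_eq γ hnn, phiOf_eq γ hnn, hb (ν 0), hb a, h 0 le_rfl]

private lemma lemA [Fintype E] (γ : Finset ℤ → Conf E → ℝ) (hspec : IsSpecification γ)
    (hnn : NonNull γ) {Λ : Finset ℤ} {j : ℤ} (hj : j ∈ Λ) {ξ η : Conf E}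
    (hag : ∀ k, k ≠ j → ξ k = η k) :
    Real.log (γ Λ ξ) - Real.log (γ Λ η) = Real.log (γ {j} ξ) - Real.log (γ {j} η) := by
  have hsub : ({j} : Finset ℤ) ⊆ Λ := Finset.singleton_subset_iff.2 hj
  have h1 := hspec.2.2 {j} Λ hsub ξ
  have h2 := hspec.2.2 {j} Λ hsub η
  have hsum : (∑ θ : {k // k ∈ ({j} : Finset ℤ)} → E, γ Λ (ovr {j} θ ξ))
      = ∑ θ : {k // k ∈ ({j} : Finset ℤ)} → E, γ Λ (ovr {j} θ η) := by
    refine Finset.sum_congr rfl fun θ _ => ?_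
    congr 1
    funext k
    by_cases h : k ∈ ({j} : Finset ℤ)
    · simp [ovr, h]
    · simp only [ovr, dif_neg h]
      exact hag k (by simpa using h)
  rw [hsum] at h1
  have hKpos : 0 < ∑ θ : {k // k ∈ ({j} : Finset ℤ)} → E, γ Λ (ovr {j} θ η) := by
    have hη := gamma_pos γ hnn Λ η
    have hjη := gamma_pos γ hnn {j} η
    rw [h2] at hη
    nlinarith
  rw [h1, h2, Real.log_mul hKpos.ne' (gamma_pos γ hnn {j} ξ).ne',
      Real.log_mul hKpos.ne' (gamma_pos γ hnn {j} η).ne']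
  ring

private lemma tiLem (γ : Finset ℤ → Conf E → ℝ) (hTI : SpecTI γ) :
    ∀ (m : ℕ) (ω : Conf E), γ {(-(m : ℤ))} (shiftZ (m : ℤ) ω) = γ {0} ω := by
  intro m
  induction m with
  | zero => intro ω; simp [shiftZ_zero']
  | succ m ih =>
    intro ω
    have hstep : ∀ ω' : Conf E, γ {(-(m : ℤ))} ω' = γ {(-(m : ℤ) - 1)} (shiftZ 1 ω') := by
      intro ω'
      have h := hTI ({(-(m : ℤ) - 1)} : Finset ℤ) ω'
      have himg : ({(-(m : ℤ) - 1)} : Finset ℤ).image (· + 1) = {(-(m : ℤ))} := by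
        rw [Finset.image_singleton]; norm_num
      rwa [himg] at h
    have e1 : ((m + 1 : ℕ) : ℤ) = (m : ℤ) + 1 := by push_cast; ring
    rw [e1, ← shiftZ_shift, show -((m : ℤ) + 1) = -(m : ℤ) - 1 from by ring,
      ← hstep, ih]

/-- `χ_n(c)`: `a` below `-n`, `c` at `0`, `ω` elsewhere. -/
private def chi (a : E) (ω : Conf E) (n : ℕ) (c : E) : Conf E :=
  fun k => if k < -(n : ℤ) then a else if k = 0 then c else ω k

private lemma shift_bca_big (a c : E) (ω : Conf E) (n : ℕ) :
    shiftZ ((n + 1 : ℕ) : ℤ)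
      (bca a (shiftZ (-((n + 1 : ℕ) : ℤ)) (upd0 ω c)) (ω (-((n + 1 : ℕ) : ℤ))))
      = chi a ω (n + 1) c := by
  funext k
  simp only [shiftZ, bca, chi, upd0, Function.update_apply]
  rw [show k + ((n + 1 : ℕ) : ℤ) + -((n + 1 : ℕ) : ℤ) = k from by ring]
  split_ifs <;> first | rfl | omega | (exact absurd rfl (by omega)) | (congr 1; omega)

private lemma shift_bca_small (a c : E) (ω : Conf E) (n : ℕ) :
    shiftZ ((n + 1 : ℕ) : ℤ)
      (bca a (shiftZ (-((n + 1 : ℕ) : ℤ)) (upd0 ω c)) a)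
      = chi a ω n c := by
  funext k
  simp only [shiftZ, bca, chi, upd0, Function.update_apply]
  rw [show k + ((n + 1 : ℕ) : ℤ) + -((n + 1 : ℕ) : ℤ) = k from by ring]
  split_ifs <;> first | rfl | omega | (congr 1; omega)

private lemma key [Fintype E] (γ : Finset ℤ → Conf E → ℝ) (hspec : IsSpecification γ)
    (hnn : NonNull γ) (hTI : SpecTI γ) (a a₀ b₀ : E) (n : ℕ) (ω : Conf E) :
    rhoN (phiOf γ a) (upd0 ω b₀) (upd0 ω a₀) n =
      Real.log (γ {0} (chi a ω n b₀)) - Real.log (γ {0} (chi a ω n a₀)) := by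
  induction n with
  | zero =>
    have hb : ∀ c x : E, bca a (upd0 ω c) x = chi a ω 0 x := by
      intro c x; funext k
      simp only [bca, chi, upd0, Function.update_apply]
      split_ifs <;> first | rfl | omega
    have hφ : ∀ c : E, phiOf γ a (upd0 ω c)
        = Real.log (γ {0} (chi a ω 0 c)) - Real.log (γ {0} (chi a ω 0 a)) := by
      intro c
      rw [phiOf_eq γ hnn, show (upd0 ω c) 0 = c from by simp [upd0],
        hb c c, hb c a]
    simp only [rhoN, Nat.cast_zero, neg_zero, Finset.Icc_self, Finset.sum_singleton,
      shiftZ_zero', hφ b₀, hφ a₀]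
    ring
  | succ n ih =>
    have h2 : ((n + 1 : ℕ) : ℤ) ∉ Finset.Icc (-(n : ℤ)) (n : ℤ) := by
      simp only [Finset.mem_Icc]; omega
    have h1 : (-((n + 1 : ℕ) : ℤ)) ∉ insert ((n + 1 : ℕ) : ℤ) (Finset.Icc (-(n : ℤ)) (n : ℤ)) := by
      simp only [Finset.mem_insert, Finset.mem_Icc]; omega
    have hIcc : Finset.Icc (-((n + 1 : ℕ) : ℤ)) ((n + 1 : ℕ) : ℤ)
        = insert (-((n + 1 : ℕ) : ℤ)) (insert ((n + 1 : ℕ) : ℤ) (Finset.Icc (-(n : ℤ)) (n : ℤ))) := by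
      ext k; simp only [Finset.mem_Icc, Finset.mem_insert]; omega
    have hsplit : rhoN (phiOf γ a) (upd0 ω b₀) (upd0 ω a₀) (n + 1)
        = (phiOf γ a (shiftZ (-((n + 1 : ℕ) : ℤ)) (upd0 ω b₀))
            - phiOf γ a (shiftZ (-((n + 1 : ℕ) : ℤ)) (upd0 ω a₀)))
          + (phiOf γ a (shiftZ ((n + 1 : ℕ) : ℤ) (upd0 ω b₀))
            - phiOf γ a (shiftZ ((n + 1 : ℕ) : ℤ) (upd0 ω a₀)))
          + rhoN (phiOf γ a) (upd0 ω b₀) (upd0 ω a₀) n := by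
      simp only [rhoN]
      rw [hIcc, Finset.sum_insert h1, Finset.sum_insert h2]
      ring
    have hpos0 : phiOf γ a (shiftZ ((n + 1 : ℕ) : ℤ) (upd0 ω b₀))
        = phiOf γ a (shiftZ ((n + 1 : ℕ) : ℤ) (upd0 ω a₀)) := by
      apply phi_congr γ hnn
      intro k hk
      simp only [shiftZ, upd0, Function.update_apply]
      rw [if_neg (by omega), if_neg (by omega)]
    have hterm : ∀ c : E, phiOf γ a (shiftZ (-((n + 1 : ℕ) : ℤ)) (upd0 ω c))
        = Real.log (γ {(-((n + 1 : ℕ) : ℤ))} (chi a ω (n + 1) c))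
          - Real.log (γ {(-((n + 1 : ℕ) : ℤ))} (chi a ω n c)) := by
      intro c
      have hν0 : (shiftZ (-((n + 1 : ℕ) : ℤ)) (upd0 ω c)) 0 = ω (-((n + 1 : ℕ) : ℤ)) := by
        simp only [shiftZ, upd0, Function.update_apply, zero_add]
        rw [if_neg (by omega)]
      have t1 := tiLem γ hTI (n + 1)
        (bca a (shiftZ (-((n + 1 : ℕ) : ℤ)) (upd0 ω c)) (ω (-((n + 1 : ℕ) : ℤ))))
      have t2 := tiLem γ hTI (n + 1)
        (bca a (shiftZ (-((n + 1 : ℕ) : ℤ)) (upd0 ω c)) a)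
      rw [shift_bca_big] at t1
      rw [shift_bca_small] at t2
      rw [phiOf_eq γ hnn, hν0, ← t1, ← t2]
    have hm0 : (-((n + 1 : ℕ) : ℤ)) ≠ (0 : ℤ) := by omega
    have hjΛ : -((n + 1 : ℕ) : ℤ) ∈ ({-((n + 1 : ℕ) : ℤ), 0} : Finset ℤ) := by
      simp
    have h0Λ : (0 : ℤ) ∈ ({-((n + 1 : ℕ) : ℤ), 0} : Finset ℤ) := by simp
    have hag1 : ∀ c : E, ∀ k, k ≠ -((n + 1 : ℕ) : ℤ) → chi a ω (n + 1) c k = chi a ω n c k := by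
      intro c k hk
      simp only [chi]
      split_ifs <;> first | rfl | omega
    have hag2 : ∀ m : ℕ, ∀ k, k ≠ (0 : ℤ) → chi a ω m b₀ k = chi a ω m a₀ k := by
      intro m k hk
      simp only [chi]
      split_ifs <;> first | rfl | omega
    have e1 := lemA γ hspec hnn hjΛ (hag1 b₀)
    have e2 := lemA γ hspec hnn hjΛ (hag1 a₀)
    have e3 := lemA γ hspec hnn h0Λ (hag2 (n + 1))
    have e4 := lemA γ hspec hnn h0Λ (hag2 n)
    rw [hsplit, hpos0, hterm b₀, hterm a₀, ih]
    linarith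

private lemma unif [Fintype E] [TopologicalSpace E] [DiscreteTopology E]
    (H : Conf E → ℝ) (hH : Continuous H) {ε : ℝ} (hε : 0 < ε) :
    ∃ N : ℕ, ∀ ξ η : Conf E, (∀ k : ℤ, -(N : ℤ) ≤ k → ξ k = η k) → |H ξ - H η| < ε := by
  by_contra hcon
  push_neg at hcon
  haveI : CompactSpace E := Finite.compactSpace
  set Z : ℕ → Set (Conf E × Conf E) := fun N =>
    {p | (∀ k : ℤ, -(N : ℤ) ≤ k → p.1 k = p.2 k) ∧ ε ≤ |H p.1 - H p.2|} with hZ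
  have hZne : ∀ N, (Z N).Nonempty := by
    intro N
    obtain ⟨ξ, η, hh1, hh2⟩ := hcon N
    exact ⟨(ξ, η), hh1, hh2⟩
  have hZcl : ∀ N, IsClosed (Z N) := by
    intro N
    have hA : IsClosed {p : Conf E × Conf E | ∀ k : ℤ, -(N : ℤ) ≤ k → p.1 k = p.2 k} := by
      have : {p : Conf E × Conf E | ∀ k : ℤ, -(N : ℤ) ≤ k → p.1 k = p.2 k}
          = ⋂ (k : ℤ), ⋂ (_ : -(N : ℤ) ≤ k), {p : Conf E × Conf E | p.1 k = p.2 k} := by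
        ext p; simp
      rw [this]
      exact isClosed_iInter fun k => isClosed_iInter fun _ =>
        isClosed_eq ((continuous_apply k).comp continuous_fst)
          ((continuous_apply k).comp continuous_snd)
    have hB : IsClosed {p : Conf E × Conf E | ε ≤ |H p.1 - H p.2|} :=
      isClosed_Ici.preimage (((hH.comp continuous_fst).sub (hH.comp continuous_snd)).abs)
    exact hA.inter hB
  have hdir : Directed (· ⊇ ·) Z := by
    intro M N
    refine ⟨max M N, fun p hp => ⟨fun k hk => hp.1 k ?_, hp.2⟩,
      fun p hp => ⟨fun k hk => hp.1 k ?_, hp.2⟩⟩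
    · have : (M : ℤ) ≤ ((max M N : ℕ) : ℤ) := by exact_mod_cast le_max_left M N
      omega
    · have : (N : ℤ) ≤ ((max M N : ℕ) : ℤ) := by exact_mod_cast le_max_right M N
      omega
  obtain ⟨p, hp⟩ := IsCompact.nonempty_iInter_of_directed_nonempty_isCompact_isClosed Z hdir hZne
    (fun N => (hZcl N).isCompact) hZcl
  have hpe : p.1 = p.2 := by
    funext k
    exact (Set.mem_iInter.1 hp k.natAbs).1 k (by omega)
  have hfin := (Set.mem_iInter.1 hp 0).2
  rw [hpe, sub_self, abs_zero] at hfin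
  linarith

end Aux

/-- For a translation-invariant Gibbsian specification `γ` with
associated potential `φ_γ`, for all `a₀, b₀ ∈ E`, `n` and `ω`,
`∑_{i=-n}^{n} (φ_γ(S^i(ω^{b₀})) - φ_γ(S^i(ω^{a₀})))` equals
`log (γ_{{0}}(b₀|𝐚_{-∞}^{-n-1}ω_{-n}^{-1}ω_1^∞) / γ_{{0}}(a₀|𝐚_{-∞}^{-n-1}ω_{-n}^{-1}ω_1^∞))`,
and as `n → ∞` this converges uniformly in `ω` to
`log (γ_{{0}}(b₀|ω_{ℤ∖{0}}) / γ_{{0}}(a₀|ω_{ℤ∖{0}}))`. -/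
theorem rhoN_phiOf_eq_log_ratio [Fintype E] [Nonempty E] [TopologicalSpace E] [DiscreteTopology E]
    [MeasurableSpace E] [MeasurableSingletonClass E]
    (γ : Finset ℤ → Conf E → ℝ) (hγ : IsGibbsSpec γ) (hTI : SpecTI γ) (a : E)
    (a₀ b₀ : E) :
    (∀ (n : ℕ) (ω : Conf E),
      rhoN (phiOf γ a) (upd0 ω b₀) (upd0 ω a₀) n =
        Real.log
          (γ ({0} : Finset ℤ) (fun k => if k < -(n : ℤ) then a else if k = 0 then b₀ else ω k) /
           γ ({0} : Finset ℤ) (fun k => if k < -(n : ℤ) then a else if k = 0 then a₀ else ω k))) ∧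
    TendstoUniformly (fun (n : ℕ) (ω : Conf E) => rhoN (phiOf γ a) (upd0 ω b₀) (upd0 ω a₀) n)
      (fun ω => Real.log (γ ({0} : Finset ℤ) (upd0 ω b₀) / γ ({0} : Finset ℤ) (upd0 ω a₀)))
      atTop := by
  obtain ⟨hspec, hnn, hcont⟩ := hγ
  constructor
  · intro n ω
    rw [key γ hspec hnn hTI a a₀ b₀ n ω,
      Real.log_div (gamma_pos γ hnn _ _).ne' (gamma_pos γ hnn _ _).ne']
    rfl
  · rw [Metric.tendstoUniformly_iff]
    intro ε hε
    have hupd : ∀ c : E, Continuous fun ω : Conf E => upd0 ω c := by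
      intro c
      apply continuous_pi
      intro k
      simp only [upd0, Function.update_apply]
      by_cases h : k = 0
      · simpa [h] using continuous_const
      · simpa [h] using continuous_apply k
    have hHc : ∀ c : E, Continuous fun ω : Conf E => Real.log (γ {0} (upd0 ω c)) := by
      intro c
      exact ((hcont {0}).comp (hupd c)).log fun ω => (gamma_pos γ hnn _ _).ne'
    obtain ⟨Nb, hNb⟩ := unif _ (hHc b₀) (half_pos hε)
    obtain ⟨Na, hNa⟩ := unif _ (hHc a₀) (half_pos hε)
    filter_upwards [eventually_ge_atTop (max Na Nb)] with n hn ω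
    have hkey := key γ hspec hnn hTI a a₀ b₀ n ω
    set σω : Conf E := fun k => if k < -(n : ℤ) then a else ω k with hσ
    have hchi : ∀ c : E, chi a ω n c = upd0 σω c := by
      intro c; funext k
      simp only [chi, upd0, Function.update_apply, hσ]
      split_ifs <;> first | rfl | omega
    have hag : ∀ N : ℕ, N ≤ n → ∀ k : ℤ, -(N : ℤ) ≤ k → ω k = σω k := by
      intro N hNn k hk
      have hcast : (N : ℤ) ≤ (n : ℤ) := by exact_mod_cast hNn
      simp only [hσ]
      rw [if_neg (by omega)]
    have h1 := hNb ω σω (hag Nb (le_trans (le_max_right _ _) hn))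
    have h2 := hNa ω σω (hag Na (le_trans (le_max_left _ _) hn))
    rw [Real.dist_eq, hkey, hchi b₀, hchi a₀,
      Real.log_div (gamma_pos γ hnn _ _).ne' (gamma_pos γ hnn _ _).ne']
    set A := Real.log (γ {0} (upd0 ω b₀))
    set B := Real.log (γ {0} (upd0 ω a₀))
    set C := Real.log (γ {0} (upd0 σω b₀))
    set D := Real.log (γ {0} (upd0 σω a₀))
    rw [show A - B - (C - D) = (A - C) + (D - B) from by ring]
    have h3 := abs_add_le (A - C) (D - B)
    have h4 : |D - B| = |B - D| := abs_sub_comm D B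
    linarith

end GP
end

section
/- Let φ : Ω → ℝ be a continuous function with the extensibility property, γ^φ its associated Gibbsian specification, and φ_{γ^φ} the potential associated with γ^φ. Then φ_{γ^φ} is weakly cohomologous to φ: for every S-invariant Borel probability measure τ on Ω, ∫ φ_{γ^φ} dτ = ∫ φ dτ − φ(𝐚), where 𝐚 is the constant configuration with symbol a at every site. -/
open Filter Topology MeasureTheory

namespace GP

variable {E : Type*}

/-! ### Auxiliary lemmas -/

section Aux

variable {E : Type*}

lemma shiftZ_comp (i j : ℤ) (ω : Conf E) : shiftZ i (shiftZ j ω) = shiftZ (j + i) ω := by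
  funext k
  show ω (k + i + j) = ω (k + (j + i))
  congr 1; ring

lemma continuous_shiftZ [TopologicalSpace E] (i : ℤ) : Continuous (shiftZ (E := E) i) :=
  continuous_pi fun _ => continuous_apply _

lemma upd0_bca (a b c : E) (ω : Conf E) : upd0 (bca a ω b) c = bca a ω c := by
  funext k
  by_cases h : k = 0
  · subst h; simp [upd0, bca]
  · simp only [upd0, Function.update_apply, h, if_false, bca]

lemma shift_bca (a : E) (ω : Conf E) :
    shiftZ 1 (bca a ω a) = bca a (shiftZ 1 ω) ((shiftZ 1 ω) 0) := by
  funext k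
  show bca a ω a (k + 1) = _
  simp only [bca, shiftZ]
  split_ifs <;> first | rfl | omega | (exfalso; omega) | (congr 1; omega)

lemma continuous_bca0 [TopologicalSpace E] (a : E) :
    Continuous (fun ω : Conf E => bca a ω (ω 0)) := by
  apply continuous_pi
  intro k
  simp only [bca]
  split_ifs
  · exact continuous_const
  · exact continuous_apply 0
  · exact continuous_apply k

lemma continuous_bcaA [TopologicalSpace E] (a : E) :
    Continuous (fun ω : Conf E => bca a ω a) := by
  apply continuous_pi
  intro k
  simp only [bca]
  split_ifs
  · exact continuous_const
  · exact continuous_const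
  · exact continuous_apply k

/-- Uniform window continuity: a continuous function on the compact shift space is
uniformly continuous with respect to agreement on a finite window. -/
lemma window [Fintype E] [TopologicalSpace E] [DiscreteTopology E]
    (φ : Conf E → ℝ) (hφc : Continuous φ) {ε : ℝ} (hε : 0 < ε) :
    ∃ m : ℕ, ∀ ξ η : Conf E, (∀ k : ℤ, k.natAbs ≤ m → ξ k = η k) → |φ ξ - φ η| < ε := by
  have key : ∀ ζ : Conf E, ∃ I : Finset ℤ,
      ∀ η : Conf E, (∀ k ∈ I, η k = ζ k) → |φ η - φ ζ| < ε / 2 := by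
    intro ζ
    have hball : φ ⁻¹' Metric.ball (φ ζ) (ε / 2) ∈ nhds ζ :=
      hφc.continuousAt.preimage_mem_nhds (Metric.ball_mem_nhds _ (by linarith))
    rw [nhds_pi, Filter.mem_pi] at hball
    obtain ⟨I, hIfin, t, ht, hsub⟩ := hball
    refine ⟨hIfin.toFinset, fun η hη => ?_⟩
    have hmem : η ∈ Set.pi I t := by
      intro k hk
      rw [hη k (hIfin.mem_toFinset.mpr hk)]
      exact mem_of_mem_nhds (ht k)
    have := hsub hmem
    rw [Set.mem_preimage, Metric.mem_ball, Real.dist_eq] at this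
    exact this
  choose I hI using key
  set U : Conf E → Set (Conf E) := fun ζ => {η | ∀ k ∈ I ζ, η k = ζ k} with hU
  have hUopen : ∀ ζ, IsOpen (U ζ) := by
    intro ζ
    have : U ζ = ⋂ k ∈ I ζ, (fun η : Conf E => η k) ⁻¹' {ζ k} := by
      ext η; simp [hU]
    rw [this]
    exact isOpen_biInter_finset fun k _ =>
      (continuous_apply k).isOpen_preimage _ (isOpen_discrete _)
  have hcover : (Set.univ : Set (Conf E)) ⊆ ⋃ ζ, U ζ := by
    intro ξ _
    exact Set.mem_iUnion.mpr ⟨ξ, fun k _ => rfl⟩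
  obtain ⟨s, hs⟩ := isCompact_univ.elim_finite_subcover U hUopen hcover
  refine ⟨s.sup (fun ζ => (I ζ).sup Int.natAbs), fun ξ η hagree => ?_⟩
  obtain ⟨ζ, hζs, hξζ⟩ : ∃ ζ ∈ s, ξ ∈ U ζ := by
    have := hs (Set.mem_univ ξ)
    simpa using this
  have hηζ : η ∈ U ζ := by
    intro k hk
    have hk1 : k.natAbs ≤ s.sup (fun ζ => (I ζ).sup Int.natAbs) :=
      le_trans (Finset.le_sup hk)
        (Finset.le_sup (f := fun ζ => (I ζ).sup Int.natAbs) hζs)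
    rw [← hagree k hk1]
    exact hξζ k hk
  have h1 := hI ζ ξ hξζ
  have h2 := hI ζ η hηζ
  have h3 := abs_sub_le (φ ξ) (φ ζ) (φ η)
  rw [abs_sub_comm (φ ζ) (φ η)] at h3
  linarith

/-- The evaluation equivalence for the one-point set `{0}`. -/
def e0 (E : Type*) : E ≃ ({k : ℤ // k ∈ ({0} : Finset ℤ)} → E) where
  toFun := fun c _ => c
  invFun := fun ξ => ξ ⟨0, Finset.mem_singleton_self 0⟩
  left_inv := fun _ => rfl
  right_inv := fun ξ => by
    funext x
    have hx : x = ⟨0, Finset.mem_singleton_self 0⟩ := Subtype.ext (Finset.mem_singleton.mp x.2)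
    rw [hx]

lemma ovr_singleton_bca (a b : E) (ξ : {k : ℤ // k ∈ ({0} : Finset ℤ)} → E) (ω : Conf E) :
    ovr {0} ξ (bca a ω b) = bca a ω (ξ ⟨0, Finset.mem_singleton_self 0⟩) := by
  funext k
  by_cases h : k = 0
  · subst h
    simp [ovr, bca]
  · have hk : k ∉ ({0} : Finset ℤ) := by simpa using h
    simp [ovr, bca, hk, h]

lemma specOf_singleton [Fintype E] (φ : Conf E → ℝ) (a b : E) (ω : Conf E) :
    specOf φ {0} (bca a ω b) = (∑ c : E, Real.exp (rho φ (bca a ω c) (bca a ω b)))⁻¹ := by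
  unfold specOf
  congr 1
  rw [← Fintype.sum_equiv (e0 E)
      (fun c => Real.exp (rho φ (bca a ω c) (bca a ω b)))
      (fun ξ => Real.exp (rho φ (ovr {0} ξ (bca a ω b)) (bca a ω b)))
      (fun c => by simp only [ovr_singleton_bca]; rfl)]

lemma rhoN_add (φ : Conf E → ℝ) (ξ η ζ : Conf E) (n : ℕ) :
    rhoN φ ξ ζ n = rhoN φ ξ η n + rhoN φ η ζ n := by
  unfold rhoN
  rw [← Finset.sum_add_distrib]
  apply Finset.sum_congr rfl
  intro i _
  ring

lemma telescope (A : ℤ → ℝ) (n : ℕ) :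
    ∑ i ∈ Finset.Icc (-(n : ℤ)) (n : ℤ), (A (i + 1) - A i) = A ((n : ℤ) + 1) - A (-(n : ℤ)) := by
  induction n with
  | zero => simp
  | succ n ih =>
    have hins : Finset.Icc (-((n : ℤ) + 1)) ((n : ℤ) + 1) =
        insert (-((n : ℤ) + 1)) (insert ((n : ℤ) + 1) (Finset.Icc (-(n : ℤ)) (n : ℤ))) := by
      ext k; simp only [Finset.mem_Icc, Finset.mem_insert]; omega
    have h1 : ((n : ℤ) + 1) ∉ Finset.Icc (-(n : ℤ)) (n : ℤ) := by
      simp only [Finset.mem_Icc]; omega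
    have h2 : (-((n : ℤ) + 1)) ∉ insert ((n : ℤ) + 1) (Finset.Icc (-(n : ℤ)) (n : ℤ)) := by
      simp only [Finset.mem_insert, Finset.mem_Icc]; omega
    push_cast
    rw [hins, Finset.sum_insert h2, Finset.sum_insert h1, ih]
    ring

end Aux

/-- For `φ` continuous with the extensibility property, the potential
`φ_{γ^φ}` is weakly cohomologous to `φ`: for every shift-invariant Borel probability
measure `τ`, `∫ φ_{γ^φ} dτ = ∫ φ dτ - φ(𝐚)`. -/
theorem phiOf_specOf_weakly_cohomologous [Fintype E] [Nonempty E] [TopologicalSpace E] [DiscreteTopology E]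
    [MeasurableSpace E] [MeasurableSingletonClass E]
    (φ : Conf E → ℝ) (hφc : Continuous φ) (hφe : Extensible φ) (a : E)
    (τ : Measure (Conf E)) (hτp : IsProbabilityMeasure τ) (hτi : ShiftInv τ) :
    ∫ ω, phiOf (specOf φ) a ω ∂τ = (∫ ω, φ ω ∂τ) - φ (fun _ => a) := by
  classical
  obtain ⟨r, hr⟩ : ∃ r : E → E → Conf E → ℝ, ∀ b c : E,
      TendstoUniformly (fun n ω => rhoN φ (upd0 ω c) (upd0 ω b) n) (r b c) atTop :=
    ⟨fun b c => (hφe b c).choose, fun b c => (hφe b c).choose_spec⟩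
  have hτ' : Measure.map (shiftZ 1) τ = τ := hτi
  have hInt : ∀ h : Conf E → ℝ, Continuous h → Integrable h τ := fun h hh =>
    hh.integrable_of_hasCompactSupport (HasCompactSupport.of_compactSpace h)
  -- pointwise convergence of the partial sums defining `rho`
  have hrho : ∀ (ω : Conf E) (b c : E),
      Tendsto (fun n => rhoN φ (bca a ω c) (bca a ω b) n) atTop (𝓝 (r b c (bca a ω b))) := by
    intro ω b c
    have h1 := (hr b c).tendsto_at (bca a ω b)
    simpa [upd0_bca] using h1
  have hrho_eq : ∀ (ω : Conf E) (b c : E),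
      rho φ (bca a ω c) (bca a ω b) = r b c (bca a ω b) := fun ω b c =>
    (hrho ω b c).limUnder_eq
  -- cocycle splitting
  have hsplit : ∀ (ω : Conf E) (c : E),
      rho φ (bca a ω c) (bca a ω a)
        = rho φ (bca a ω c) (bca a ω (ω 0)) + rho φ (bca a ω (ω 0)) (bca a ω a) := by
    intro ω c
    have h1 := (hrho ω (ω 0) c).add (hrho ω a (ω 0))
    have h2 : (fun n => rhoN φ (bca a ω c) (bca a ω (ω 0)) n
        + rhoN φ (bca a ω (ω 0)) (bca a ω a) n)
        = fun n => rhoN φ (bca a ω c) (bca a ω a) n := by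
      funext n; rw [← rhoN_add]
    rw [h2] at h1
    rw [hrho_eq ω (ω 0) c, hrho_eq ω a (ω 0)]
    exact h1.limUnder_eq
  -- the closed formula for the potential of the specification
  have hphi : ∀ ω : Conf E,
      phiOf (specOf φ) a ω = rho φ (bca a ω (ω 0)) (bca a ω a) := by
    intro ω
    have hSb : (0:ℝ) < ∑ c : E, Real.exp (rho φ (bca a ω c) (bca a ω (ω 0))) :=
      Finset.sum_pos (fun c _ => Real.exp_pos _) Finset.univ_nonempty
    have hSa : (∑ c : E, Real.exp (rho φ (bca a ω c) (bca a ω a)))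
        = Real.exp (rho φ (bca a ω (ω 0)) (bca a ω a))
          * ∑ c : E, Real.exp (rho φ (bca a ω c) (bca a ω (ω 0))) := by
      rw [Finset.mul_sum]
      refine Finset.sum_congr rfl (fun c _ => ?_)
      rw [← Real.exp_add, hsplit ω c, add_comm]
    unfold phiOf
    rw [specOf_singleton φ a (ω 0) ω, specOf_singleton φ a a ω, hSa]
    have hdiv : (∑ c : E, Real.exp (rho φ (bca a ω c) (bca a ω (ω 0))))⁻¹
        / (Real.exp (rho φ (bca a ω (ω 0)) (bca a ω a))
           * ∑ c : E, Real.exp (rho φ (bca a ω c) (bca a ω (ω 0))))⁻¹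
        = Real.exp (rho φ (bca a ω (ω 0)) (bca a ω a)) := by
      rw [mul_inv, div_eq_mul_inv, mul_inv, inv_inv, inv_inv]
      rw [mul_comm (Real.exp _) _, ← mul_assoc, inv_mul_cancel₀ (ne_of_gt hSb), one_mul]
    rw [hdiv, Real.log_exp]
  -- uniform approximation of the potential by the partial sums
  have hgF : ∀ ε : ℝ, 0 < ε → ∃ N : ℕ, ∀ n ≥ N, ∀ ω : Conf E,
      |rhoN φ (bca a ω (ω 0)) (bca a ω a) n - phiOf (specOf φ) a ω| < ε := by
    intro ε hε
    have h1 : ∀ b : E, ∃ N : ℕ, ∀ n ≥ N, ∀ ω' : Conf E,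
        |rhoN φ (upd0 ω' b) (upd0 ω' a) n - r a b ω'| < ε := by
      intro b
      have h2 := (Metric.tendstoUniformly_iff.mp (hr a b)) ε hε
      rw [eventually_atTop] at h2
      obtain ⟨N, hN⟩ := h2
      exact ⟨N, fun n hn ω' => by
        have h3 := hN n hn ω'
        rwa [Real.dist_eq, abs_sub_comm] at h3⟩
    choose N hN using h1
    refine ⟨Finset.univ.sup N, fun n hn ω => ?_⟩
    have h3 := hN (ω 0) n (le_trans (Finset.le_sup (Finset.mem_univ _)) hn) (bca a ω a)
    rw [upd0_bca, upd0_bca] at h3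
    rw [hphi ω, hrho_eq ω a (ω 0)]
    exact h3
  -- continuity of the partial sums
  have hQcont : ∀ i : ℤ, Continuous fun ω : Conf E => φ (shiftZ i (bca a ω a)) :=
    fun i => hφc.comp ((continuous_shiftZ i).comp (continuous_bcaA a))
  have hPcont : ∀ i : ℤ, Continuous fun ω : Conf E => φ (shiftZ i (bca a ω (ω 0))) :=
    fun i => hφc.comp ((continuous_shiftZ i).comp (continuous_bca0 a))
  have hgcont : ∀ n : ℕ, Continuous fun ω : Conf E =>
      rhoN φ (bca a ω (ω 0)) (bca a ω a) n := by
    intro n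
    have h0 : (fun ω : Conf E => rhoN φ (bca a ω (ω 0)) (bca a ω a) n)
        = fun ω : Conf E => ∑ i ∈ Finset.Icc (-(n:ℤ)) (n:ℤ),
            (φ (shiftZ i (bca a ω (ω 0))) - φ (shiftZ i (bca a ω a))) := rfl
    rw [h0]
    exact continuous_finset_sum _ fun i _ => (hPcont i).sub (hQcont i)
  -- continuity of the potential, as a uniform limit
  have htu : TendstoUniformly (fun n ω => rhoN φ (bca a ω (ω 0)) (bca a ω a) n)
      (phiOf (specOf φ) a) atTop := by
    rw [Metric.tendstoUniformly_iff]
    intro ε hε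
    obtain ⟨N, hN⟩ := hgF ε hε
    rw [eventually_atTop]
    exact ⟨N, fun n hn ω => by
      rw [Real.dist_eq, abs_sub_comm]; exact hN n hn ω⟩
  have hFcont : Continuous (phiOf (specOf φ) a) :=
    htu.continuous (Eventually.of_forall hgcont).frequently
  -- convergence of integrals of the partial sums to the integral of the potential
  have hIg : Tendsto (fun n : ℕ => ∫ ω, rhoN φ (bca a ω (ω 0)) (bca a ω a) n ∂τ)
      atTop (𝓝 (∫ ω, phiOf (specOf φ) a ω ∂τ)) := by
    rw [Metric.tendsto_atTop]
    intro ε hε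
    obtain ⟨N, hN⟩ := hgF (ε/2) (by linarith)
    refine ⟨N, fun n hn => ?_⟩
    rw [Real.dist_eq, ← integral_sub (hInt _ (hgcont n)) (hInt _ hFcont)]
    have hb : ∀ ω : Conf E,
        ‖rhoN φ (bca a ω (ω 0)) (bca a ω a) n - phiOf (specOf φ) a ω‖ ≤ ε/2 := fun ω => by
      rw [Real.norm_eq_abs]; exact le_of_lt (hN n hn ω)
    have h4 := norm_integral_le_of_norm_le_const (μ := τ) (Eventually.of_forall hb)
    rw [probReal_univ, mul_one] at h4
    calc |∫ ω, (rhoN φ (bca a ω (ω 0)) (bca a ω a) n - phiOf (specOf φ) a ω) ∂τ|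
        = ‖∫ ω, (rhoN φ (bca a ω (ω 0)) (bca a ω a) n - phiOf (specOf φ) a ω) ∂τ‖ :=
          (Real.norm_eq_abs _).symm
      _ ≤ ε/2 := h4
      _ < ε := by linarith
  -- invariance of the measure
  have hmeas : Measurable (shiftZ (E := E) 1) := (continuous_shiftZ 1).measurable
  have hinv : ∀ h : Conf E → ℝ, Continuous h →
      ∫ ω, h (shiftZ 1 ω) ∂τ = ∫ ω, h ω ∂τ := by
    intro h hh
    conv_rhs => rw [← hτ']
    rw [integral_map hmeas.aemeasurable hh.aestronglyMeasurable]
  obtain ⟨A, hA⟩ : ∃ A : ℤ → ℝ, ∀ i : ℤ, A i = ∫ ω, φ (shiftZ i (bca a ω a)) ∂τ :=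
    ⟨_, fun _ => rfl⟩
  -- the key exchange identity
  have hPA : ∀ i : ℤ, ∫ ω, φ (shiftZ i (bca a ω (ω 0))) ∂τ = A (i + 1) := by
    intro i
    calc ∫ ω, φ (shiftZ i (bca a ω (ω 0))) ∂τ
        = ∫ ω, φ (shiftZ i (bca a (shiftZ 1 ω) ((shiftZ 1 ω) 0))) ∂τ :=
          (hinv _ (hPcont i)).symm
      _ = ∫ ω, φ (shiftZ (i + 1) (bca a ω a)) ∂τ := by
          have h2 : (fun ω : Conf E => φ (shiftZ i (bca a (shiftZ 1 ω) ((shiftZ 1 ω) 0))))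
              = fun ω : Conf E => φ (shiftZ (i + 1) (bca a ω a)) := by
            funext ω
            rw [← shift_bca, shiftZ_comp, add_comm 1 i]
          rw [h2]
      _ = A (i + 1) := (hA (i + 1)).symm
  -- iterated invariance
  have hiter : ∀ j : ℕ, ∫ ω, φ (shiftZ (j : ℤ) ω) ∂τ = ∫ ω, φ ω ∂τ := by
    intro j
    induction j with
    | zero =>
      have h0 : (fun ω : Conf E => φ (shiftZ ((0:ℕ) : ℤ) ω)) = fun ω => φ ω := by
        funext ω
        have : shiftZ ((0:ℕ) : ℤ) ω = ω := funext fun k => by simp [shiftZ]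
        rw [this]
      rw [h0]
    | succ j ih =>
      have hc : ((j + 1 : ℕ) : ℤ) = 1 + (j : ℤ) := by push_cast; ring
      calc ∫ ω, φ (shiftZ ((j + 1 : ℕ) : ℤ) ω) ∂τ
          = ∫ ω, φ (shiftZ (j : ℤ) (shiftZ 1 ω)) ∂τ := by
            have h2 : (fun ω : Conf E => φ (shiftZ ((j + 1 : ℕ) : ℤ) ω))
                = fun ω : Conf E => φ (shiftZ (j : ℤ) (shiftZ 1 ω)) := by
              funext ω
              rw [shiftZ_comp, ← hc]
            rw [h2]
        _ = ∫ ω, φ (shiftZ (j : ℤ) ω) ∂τ :=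
            hinv (fun ω => φ (shiftZ (j : ℤ) ω)) (hφc.comp (continuous_shiftZ _))
        _ = ∫ ω, φ ω ∂τ := ih
  -- telescoping identity for the integrals of the partial sums
  have hteln : ∀ n : ℕ, ∫ ω, rhoN φ (bca a ω (ω 0)) (bca a ω a) n ∂τ
      = A ((n:ℤ) + 1) - A (-(n:ℤ)) := by
    intro n
    calc ∫ ω, rhoN φ (bca a ω (ω 0)) (bca a ω a) n ∂τ
        = ∑ i ∈ Finset.Icc (-(n:ℤ)) (n:ℤ),
            ∫ ω, (φ (shiftZ i (bca a ω (ω 0))) - φ (shiftZ i (bca a ω a))) ∂τ :=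
          integral_finset_sum _ (fun i _ => hInt _ ((hPcont i).sub (hQcont i)))
      _ = ∑ i ∈ Finset.Icc (-(n:ℤ)) (n:ℤ), (A (i + 1) - A i) := by
          refine Finset.sum_congr rfl (fun i _ => ?_)
          rw [integral_sub (hInt _ (hPcont i)) (hInt _ (hQcont i)), hPA i, hA i]
      _ = A ((n:ℤ) + 1) - A (-(n:ℤ)) := telescope A n
  -- limit of the boundary terms
  have hA1 : Tendsto (fun n : ℕ => A ((n:ℤ) + 1)) atTop (𝓝 (∫ ω, φ ω ∂τ)) := by
    rw [Metric.tendsto_atTop]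
    intro ε hε
    obtain ⟨m, hm⟩ := window φ hφc (show (0:ℝ) < ε/2 by linarith)
    refine ⟨m, fun n hn => ?_⟩
    have hsh : ∫ ω, φ (shiftZ ((n:ℤ) + 1) ω) ∂τ = ∫ ω, φ ω ∂τ := by
      have h5 := hiter (n + 1)
      rwa [Nat.cast_add, Nat.cast_one] at h5
    rw [Real.dist_eq, hA ((n:ℤ) + 1), ← hsh,
      ← integral_sub (hInt _ (hQcont _))
        (hInt (fun ω => φ (shiftZ ((n:ℤ) + 1) ω)) (hφc.comp (continuous_shiftZ _)))]
    have hb : ∀ ω : Conf E,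
        ‖φ (shiftZ ((n:ℤ) + 1) (bca a ω a)) - φ (shiftZ ((n:ℤ) + 1) ω)‖ ≤ ε/2 := by
      intro ω
      rw [Real.norm_eq_abs]
      refine le_of_lt (hm _ _ fun k hk => ?_)
      show bca a ω a (k + ((n:ℤ) + 1)) = ω (k + ((n:ℤ) + 1))
      simp only [bca]
      rw [if_neg (by omega), if_neg (by omega)]
    have h4 := norm_integral_le_of_norm_le_const (μ := τ) (Eventually.of_forall hb)
    rw [probReal_univ, mul_one] at h4
    calc |∫ ω, (φ (shiftZ ((n:ℤ) + 1) (bca a ω a)) - φ (shiftZ ((n:ℤ) + 1) ω)) ∂τ|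
        = ‖∫ ω, (φ (shiftZ ((n:ℤ) + 1) (bca a ω a)) - φ (shiftZ ((n:ℤ) + 1) ω)) ∂τ‖ :=
          (Real.norm_eq_abs _).symm
      _ ≤ ε/2 := h4
      _ < ε := by linarith
  have hA2 : Tendsto (fun n : ℕ => A (-(n:ℤ))) atTop (𝓝 (φ (fun _ => a))) := by
    rw [Metric.tendsto_atTop]
    intro ε hε
    obtain ⟨m, hm⟩ := window φ hφc (show (0:ℝ) < ε/2 by linarith)
    refine ⟨m, fun n hn => ?_⟩
    have hconst : ∫ _ : Conf E, φ (fun _ => a) ∂τ = φ (fun _ => a) := by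
      rw [integral_const, probReal_univ, one_smul]
    rw [Real.dist_eq, hA (-(n:ℤ)), ← hconst,
      ← integral_sub (hInt _ (hQcont _))
        (hInt (fun _ => φ (fun _ => a)) continuous_const)]
    have hb : ∀ ω : Conf E,
        ‖φ (shiftZ (-(n:ℤ)) (bca a ω a)) - φ (fun _ => a)‖ ≤ ε/2 := by
      intro ω
      rw [Real.norm_eq_abs]
      refine le_of_lt (hm _ _ fun k hk => ?_)
      show bca a ω a (k + -(n:ℤ)) = a
      simp only [bca]
      split_ifs with h1 h2
      · rfl
      · rfl
      · exfalso; omega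
    have h4 := norm_integral_le_of_norm_le_const (μ := τ) (Eventually.of_forall hb)
    rw [probReal_univ, mul_one] at h4
    calc |∫ ω, (φ (shiftZ (-(n:ℤ)) (bca a ω a)) - φ (fun _ => a)) ∂τ|
        = ‖∫ ω, (φ (shiftZ (-(n:ℤ)) (bca a ω a)) - φ (fun _ => a)) ∂τ‖ :=
          (Real.norm_eq_abs _).symm
      _ ≤ ε/2 := h4
      _ < ε := by linarith
  have hlim2 : Tendsto (fun n : ℕ => ∫ ω, rhoN φ (bca a ω (ω 0)) (bca a ω a) n ∂τ)
      atTop (𝓝 ((∫ ω, φ ω ∂τ) - φ (fun _ => a))) :=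
    Tendsto.congr (fun n => (hteln n).symm) (hA1.sub hA2)
  exact tendsto_nhds_unique hIg hlim2

end GP
end

section
/- Let φ : Ω → ℝ be continuous and τ an S-invariant Borel probability measure on Ω. Fix a ∈ E and let 𝐚 be the constant-a configuration. Then lim_{n→∞} ∫_Ω Σ_{i=−n}^{n} [ φ(S^i(𝐚_{−∞}^{−1} ω_0^{∞})) − φ(S^i(𝐚_{−∞}^{0} ω_1^{∞})) ] τ(dω) = ∫_Ω φ dτ − φ(𝐚), where 𝐚_{−∞}^{−1} ω_0^{∞} (resp. 𝐚_{−∞}^{0} ω_1^{∞}) denotes the configuration equal to a at all coordinates k ≤ −1 (resp. k ≤ 0) and equal to ω_k at the remaining coordinates. -/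
open Filter Topology MeasureTheory

namespace GP

variable {E : Type*}

section Aux14

variable {E : Type*}

lemma shiftZ_shiftZ (i j : ℤ) (ω : Conf E) : shiftZ i (shiftZ j ω) = shiftZ (i + j) ω := by
  funext k
  simp only [shiftZ]
  ring_nf

/-- On the compact space `Conf E`, a continuous function is "uniformly local". -/
lemma exists_locality [Finite E] [TopologicalSpace E] [DiscreteTopology E]
    (φ : Conf E → ℝ) (hφc : Continuous φ) {ε : ℝ} (hε : 0 < ε) :
    ∃ N : ℕ, ∀ x y : Conf E, (∀ k : ℤ, |k| ≤ (N : ℤ) → x k = y k) → |φ x - φ y| ≤ ε := by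
  classical
  set C : Set (Conf E × Conf E) := {p | ε ≤ |φ p.1 - φ p.2|} with hCdef
  have hCc : IsClosed C :=
    isClosed_le continuous_const
      ((continuous_abs).comp ((hφc.comp continuous_fst).sub (hφc.comp continuous_snd)))
  have hC : IsCompact C := hCc.isCompact
  set D : ℕ → Set (Conf E × Conf E) :=
    fun N => {p | ∀ k : ℤ, |k| ≤ (N : ℤ) → p.1 k = p.2 k} with hDdef
  have hDc : ∀ N, IsClosed (D N) := by
    intro N
    have : D N = ⋂ k ∈ {k : ℤ | |k| ≤ (N : ℤ)}, {p : Conf E × Conf E | p.1 k = p.2 k} := by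
      ext p; simp [hDdef]
    rw [this]
    exact isClosed_biInter fun k _ =>
      isClosed_eq ((continuous_apply k).comp continuous_fst)
        ((continuous_apply k).comp continuous_snd)
  have hinter : C ∩ ⋂ N, D N = ∅ := by
    ext p
    simp only [Set.mem_inter_iff, Set.mem_iInter, Set.mem_empty_iff_false, iff_false, not_and]
    intro hp hd
    have hpe : p.1 = p.2 := funext fun k => hd k.natAbs k (le_of_eq (Int.abs_eq_natAbs k))
    rw [hCdef] at hp
    simp only [Set.mem_setOf_eq, hpe, sub_self, abs_zero] at hp
    exact absurd hp (not_le.mpr hε)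
  have hdir : Directed (· ⊇ ·) D := by
    intro N M
    refine ⟨max N M, fun p hp k hk => hp k ?_, fun p hp k hk => hp k ?_⟩
    · exact hk.trans (by exact_mod_cast le_max_left N M)
    · exact hk.trans (by exact_mod_cast le_max_right N M)
  obtain ⟨N, hN⟩ := hC.elim_directed_family_closed D hDc hinter hdir
  refine ⟨N, fun x y hxy => ?_⟩
  by_contra h
  have hmem : (x, y) ∈ C ∩ D N := ⟨le_of_lt (not_le.mp h), fun k hk => hxy k hk⟩
  rw [hN] at hmem
  exact hmem

section Meas

variable [Fintype E] [TopologicalSpace E] [DiscreteTopology E]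
  [MeasurableSpace E] [MeasurableSingletonClass E]

lemma integrable_of_cont (τ : Measure (Conf E)) [IsProbabilityMeasure τ]
    {f : Conf E → ℝ} (hf : Continuous f) : Integrable f τ :=
  hf.integrable_of_hasCompactSupport (HasCompactSupport.of_compactSpace f)

lemma integral_shift1 (τ : Measure (Conf E)) (hτi : ShiftInv τ)
    {f : Conf E → ℝ} (hf : Continuous f) :
    ∫ ω, f (shiftZ 1 ω) ∂τ = ∫ ω, f ω ∂τ := by
  have hm : Measurable (shiftZ (E := E) 1) := (continuous_shiftZ 1).measurable
  calc ∫ ω, f (shiftZ 1 ω) ∂τ = ∫ ω, f ω ∂(Measure.map (shiftZ 1) τ) :=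
        (integral_map hm.aemeasurable hf.aestronglyMeasurable).symm
    _ = ∫ ω, f ω ∂τ := by rw [hτi]

lemma integral_shiftn (τ : Measure (Conf E)) (hτi : ShiftInv τ)
    {f : Conf E → ℝ} (hf : Continuous f) :
    ∀ n : ℕ, ∫ ω, f (shiftZ (n : ℤ) ω) ∂τ = ∫ ω, f ω ∂τ := by
  intro n
  induction n with
  | zero =>
      have h0 : ∀ ω : Conf E, shiftZ ((0 : ℕ) : ℤ) ω = ω := by
        intro ω; funext k; simp [shiftZ]
      simp only [h0]
  | succ m ih =>
      have h1 : ∀ ω : Conf E, shiftZ ((m + 1 : ℕ) : ℤ) ω = shiftZ (m : ℤ) (shiftZ 1 ω) := by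
        intro ω; rw [shiftZ_shiftZ]; norm_num
      calc ∫ ω, f (shiftZ ((m + 1 : ℕ) : ℤ) ω) ∂τ
          = ∫ ω, (fun ω' => f (shiftZ (m : ℤ) ω')) (shiftZ 1 ω) ∂τ := by
            simp only [h1]
        _ = ∫ ω, f (shiftZ (m : ℤ) ω) ∂τ :=
            integral_shift1 τ hτi (hf.comp (continuous_shiftZ (m : ℤ)))
        _ = ∫ ω, f ω ∂τ := ih

end Meas

lemma telescope_Icc (g : ℤ → ℝ) :
    ∀ (n : ℕ) (a : ℤ), ∑ i ∈ Finset.Icc a (a + (n : ℤ)), (g i - g (i - 1)) = g (a + n) - g (a - 1) := by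
  intro n
  induction n with
  | zero => intro a; simp
  | succ m ih =>
      intro a
      have hins : Finset.Icc a (a + ((m + 1 : ℕ) : ℤ)) =
          insert (a + (m : ℤ) + 1) (Finset.Icc a (a + (m : ℤ))) := by
        ext x
        simp only [Finset.mem_Icc, Finset.mem_insert]
        push_cast
        omega
      rw [hins, Finset.sum_insert (by simp only [Finset.mem_Icc]; omega)]
      rw [ih a]
      push_cast
      ring_nf

end Aux14

/-- For a continuous `φ` and a shift-invariant Borel probability
measure `τ`, `lim_n ∫ ∑_{i=-n}^{n} (φ(S^i(𝐚_{-∞}^{-1}ω_0^∞)) - φ(S^i(𝐚_{-∞}^{0}ω_1^∞))) dτ(ω)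
= ∫ φ dτ - φ(𝐚)`. -/
theorem integral_telescoping_limit [Fintype E] [Nonempty E] [TopologicalSpace E] [DiscreteTopology E]
    [MeasurableSpace E] [MeasurableSingletonClass E]
    (φ : Conf E → ℝ) (hφc : Continuous φ) (a : E)
    (τ : Measure (Conf E)) (hτp : IsProbabilityMeasure τ) (hτi : ShiftInv τ) :
    Tendsto (fun n : ℕ =>
        ∫ ω, (∑ i ∈ Finset.Icc (-(n : ℤ)) (n : ℤ),
          (φ (shiftZ i (fun k => if k < 0 then a else ω k)) -
           φ (shiftZ i (fun k => if k ≤ 0 then a else ω k)))) ∂τ)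
      atTop (𝓝 ((∫ ω, φ ω ∂τ) - φ (fun _ => a))) := by
  classical
  haveI := hτp
  set aconf : Conf E := fun _ => a with haconf
  set ξ : Conf E → Conf E := fun ω k => if k < 0 then a else ω k with hξ
  have hξc : Continuous ξ := by
    apply continuous_pi
    intro k
    by_cases h : k < 0
    · simpa [hξ, h] using (continuous_const : Continuous fun _ : Conf E => a)
    · simpa [hξ, h] using continuous_apply k
  set F : ℤ → Conf E → ℝ := fun i ω => φ (shiftZ i (ξ ω)) with hF
  have hFc : ∀ i, Continuous (F i) := fun i => hφc.comp ((continuous_shiftZ i).comp hξc)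
  set I : ℤ → ℝ := fun i => ∫ ω, F i ω ∂τ with hI
  have hkey : ∀ n : ℕ, (∫ ω, (∑ i ∈ Finset.Icc (-(n : ℤ)) (n : ℤ),
          (φ (shiftZ i (fun k => if k < 0 then a else ω k)) -
           φ (shiftZ i (fun k => if k ≤ 0 then a else ω k)))) ∂τ)
        = I (n : ℤ) - I (-(n : ℤ) - 1) := by
    intro n
    have hshift : ∀ (i : ℤ) (ω : Conf E),
        shiftZ i (fun k => if k ≤ 0 then a else ω k) = shiftZ (i - 1) (ξ (shiftZ 1 ω)) := by
      intro i ω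
      funext k
      simp only [shiftZ, hξ]
      rw [show k + (i - 1) + 1 = k + i by ring]
      by_cases h : k + i ≤ 0
      · rw [if_pos h, if_pos (by omega : k + (i - 1) < 0)]
      · rw [if_neg h, if_neg (by omega : ¬ k + (i - 1) < 0)]
    have hrw : ∀ ω : Conf E,
        (∑ i ∈ Finset.Icc (-(n : ℤ)) (n : ℤ),
          (φ (shiftZ i (fun k => if k < 0 then a else ω k)) -
           φ (shiftZ i (fun k => if k ≤ 0 then a else ω k))))
        = ∑ i ∈ Finset.Icc (-(n : ℤ)) (n : ℤ), (F i ω - F (i - 1) (shiftZ 1 ω)) := by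
      intro ω
      refine Finset.sum_congr rfl fun i _ => ?_
      rw [hshift i ω]
    calc (∫ ω, (∑ i ∈ Finset.Icc (-(n : ℤ)) (n : ℤ),
          (φ (shiftZ i (fun k => if k < 0 then a else ω k)) -
           φ (shiftZ i (fun k => if k ≤ 0 then a else ω k)))) ∂τ)
        = ∫ ω, (∑ i ∈ Finset.Icc (-(n : ℤ)) (n : ℤ), (F i ω - F (i - 1) (shiftZ 1 ω))) ∂τ := by
          exact integral_congr_ae (Filter.Eventually.of_forall hrw)
      _ = ∑ i ∈ Finset.Icc (-(n : ℤ)) (n : ℤ), ∫ ω, (F i ω - F (i - 1) (shiftZ 1 ω)) ∂τ := by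
          exact integral_finset_sum _ fun i _ =>
            integrable_of_cont τ ((hFc i).sub ((hFc (i - 1)).comp (continuous_shiftZ 1)))
      _ = ∑ i ∈ Finset.Icc (-(n : ℤ)) (n : ℤ), (I i - I (i - 1)) := by
          refine Finset.sum_congr rfl fun i _ => ?_
          have hc2 : Continuous fun ω : Conf E => F (i - 1) (shiftZ 1 ω) :=
            (hFc (i - 1)).comp (continuous_shiftZ 1)
          rw [integral_sub (integrable_of_cont τ (hFc i)) (integrable_of_cont τ hc2)]
          rw [integral_shift1 τ hτi (hFc (i - 1))]
      _ = I (n : ℤ) - I (-(n : ℤ) - 1) := by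
          have h2 : Finset.Icc (-(n : ℤ)) (n : ℤ) = Finset.Icc (-(n : ℤ)) (-(n : ℤ) + ((2 * n : ℕ) : ℤ)) := by
            congr 1; push_cast; ring
          rw [h2, telescope_Icc I (2 * n) (-(n : ℤ))]
          congr 2
          push_cast; ring
  have hmain : Tendsto (fun n : ℕ => I (n : ℤ) - I (-(n : ℤ) - 1)) atTop
      (𝓝 ((∫ ω, φ ω ∂τ) - φ aconf)) := by
    rw [Metric.tendsto_atTop]
    intro ε hε
    obtain ⟨N, hN⟩ := exists_locality φ hφc (show (0 : ℝ) < ε / 4 by linarith)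
    refine ⟨N, fun n hn => ?_⟩
    have hA : |I (n : ℤ) - ∫ ω, φ ω ∂τ| ≤ ε / 4 := by
      have heq : I (n : ℤ) - ∫ ω, φ ω ∂τ = ∫ ω, (F (n : ℤ) ω - φ (shiftZ (n : ℤ) ω)) ∂τ := by
        have hc2 : Continuous fun ω : Conf E => φ (shiftZ ((n : ℕ) : ℤ) ω) :=
          hφc.comp (continuous_shiftZ _)
        rw [integral_sub (integrable_of_cont τ (hFc _)) (integrable_of_cont τ hc2)]
        rw [integral_shiftn τ hτi hφc n]
      have hb : ∀ ω : Conf E, ‖F (n : ℤ) ω - φ (shiftZ (n : ℤ) ω)‖ ≤ ε / 4 := by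
        intro ω
        rw [Real.norm_eq_abs]
        refine hN _ _ fun k hk => ?_
        have hk' : -(N : ℤ) ≤ k := neg_le_of_abs_le hk
        have : ¬ (k + (n : ℤ) < 0) := by omega
        simp only [shiftZ, hξ, this, if_false]
      calc |I (n : ℤ) - ∫ ω, φ ω ∂τ| = ‖∫ ω, (F (n : ℤ) ω - φ (shiftZ (n : ℤ) ω)) ∂τ‖ := by
            rw [heq, Real.norm_eq_abs]
        _ ≤ (ε / 4) * (τ Set.univ).toReal :=
            norm_integral_le_of_norm_le_const (Filter.Eventually.of_forall hb)
        _ = ε / 4 := by simp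
    have hB : |I (-(n : ℤ) - 1) - φ aconf| ≤ ε / 4 := by
      have heq : I (-(n : ℤ) - 1) - φ aconf = ∫ ω, (F (-(n : ℤ) - 1) ω - φ aconf) ∂τ := by
        rw [integral_sub (integrable_of_cont τ (hFc _)) (integrable_const _)]
        simp
        rfl
      have hb : ∀ ω : Conf E, ‖F (-(n : ℤ) - 1) ω - φ aconf‖ ≤ ε / 4 := by
        intro ω
        rw [Real.norm_eq_abs]
        refine hN _ _ fun k hk => ?_
        have hk' : k ≤ (N : ℤ) := le_of_abs_le hk
        have : k + (-(n : ℤ) - 1) < 0 := by omega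
        simp only [shiftZ, hξ, this, if_true, haconf]
      calc |I (-(n : ℤ) - 1) - φ aconf|
          = ‖∫ ω, (F (-(n : ℤ) - 1) ω - φ aconf) ∂τ‖ := by rw [heq, Real.norm_eq_abs]
        _ ≤ (ε / 4) * (τ Set.univ).toReal :=
            norm_integral_le_of_norm_le_const (Filter.Eventually.of_forall hb)
        _ = ε / 4 := by simp
    have : (I (n : ℤ) - I (-(n : ℤ) - 1)) - ((∫ ω, φ ω ∂τ) - φ aconf)
        = (I (n : ℤ) - ∫ ω, φ ω ∂τ) - (I (-(n : ℤ) - 1) - φ aconf) := by ring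
    rw [Real.dist_eq, this]
    calc |(I (n : ℤ) - ∫ ω, φ ω ∂τ) - (I (-(n : ℤ) - 1) - φ aconf)|
        ≤ |I (n : ℤ) - ∫ ω, φ ω ∂τ| + |I (-(n : ℤ) - 1) - φ aconf| := abs_sub _ _
      _ ≤ ε / 4 + ε / 4 := add_le_add hA hB
      _ < ε := by linarith
  exact Tendsto.congr (fun n => (hkey n).symm) hmain


end GP
end
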